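/- Let f : I → ℝ be continuous on I and C¹ on the interior of I. Then f' is convex on int I if and only if f'((a+b)/2) ≤ (f(b) - f(a))/(b-a) for all a < b in int I. -/

import Mathlib

open Set intervalIntegral MeasureTheory

theorem stmt10 (I : Set ℝ) (hI : I.OrdConnected) (f f' : ℝ → ℝ)
    (hcont : ContinuousOn f I)
    (hderiv : ∀ x ∈ interior I, HasDerivAt f (f' x) x)
    (hcont' : ContinuousOn f' (interior I)) :
    ConvexOn ℝ (interior I) f' ↔
      ∀ a b : ℝ, a ∈ interior I → b ∈ interior I → a < b →
        f' ((a + b) / 2) ≤ (f b - f a) / (b - a) := by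
  have hJ : (interior I).OrdConnected := hI.interior
  have hsub : ∀ {a b : ℝ}, a ∈ interior I → b ∈ interior I → Set.Icc a b ⊆ interior I :=
    fun ha hb => hJ.out ha hb
  have hftc : ∀ a b : ℝ, a ∈ interior I → b ∈ interior I → a ≤ b →
      (∫ x in a..b, f' x) = f b - f a := by
    intro a b ha hb hab
    refine intervalIntegral.integral_eq_sub_of_hasDerivAt (fun x hx => ?_) ?_
    · exact hderiv x (hsub ha hb (by rwa [Set.uIcc_of_le hab] at hx))
    · exact (hcont'.mono (by rw [Set.uIcc_of_le hab]; exact hsub ha hb)).intervalIntegrable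
  constructor
  · -- forward direction
    intro hconv a b ha hb hab
    have hm : (a + b) / 2 ∈ interior I := hsub ha hb ⟨by linarith, by linarith⟩
    rw [← hftc a b ha hb hab.le, le_div_iff₀ (by linarith : (0:ℝ) < b - a)]
    set m := (a + b) / 2 with hmdef
    have hamle : a ≤ m := by rw [hmdef]; linarith
    have hmble : m ≤ b := by rw [hmdef]; linarith
    have hIam : Set.Icc a m ⊆ interior I := hsub ha hm
    have hImb : Set.Icc m b ⊆ interior I := hsub hm hb
    have hint1 : IntervalIntegrable f' volume a m :=
      (hcont'.mono (by rw [Set.uIcc_of_le hamle]; exact hIam)).intervalIntegrable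
    have hint2 : IntervalIntegrable f' volume m b :=
      (hcont'.mono (by rw [Set.uIcc_of_le hmble]; exact hImb)).intervalIntegrable
    have hrefl : ContinuousOn (fun x => f' (a + b - x)) (Set.Icc m b) := by
      apply hcont'.comp (Continuous.continuousOn (by continuity))
      intro x hx
      exact hIam ⟨by simp only [hmdef] at hx ⊢; linarith [hx.2], by
        simp only [hmdef] at hx ⊢; linarith [hx.1]⟩
    have hint3 : IntervalIntegrable (fun x => f' (a + b - x)) volume m b :=
      (by rwa [Set.uIcc_of_le hmble] : ContinuousOn _ (Set.uIcc m b)).intervalIntegrable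
    have h1 : (∫ x in a..m, f' x) = ∫ x in m..b, f' (a + b - x) := by
      rw [intervalIntegral.integral_comp_sub_left f' (a + b)]
      have e1 : a + b - b = a := by ring
      have e2 : a + b - m = m := by rw [hmdef]; ring
      rw [e1, e2]
    have hsplit : (∫ x in a..b, f' x) = (∫ x in a..m, f' x) + ∫ x in m..b, f' x :=
      (intervalIntegral.integral_add_adjacent_intervals hint1 hint2).symm
    have hptw : ∀ x ∈ Set.Icc m b, 2 * f' m ≤ f' (a + b - x) + f' x := by
      intro x hx
      have hx1 : a + b - x ∈ interior I := hIam ⟨by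
        simp only [hmdef] at hx ⊢; linarith [hx.2], by
        simp only [hmdef] at hx ⊢; linarith [hx.1]⟩
      have hx2 : x ∈ interior I := hImb hx
      have hc := hconv.2 hx1 hx2 (by norm_num : (0:ℝ) ≤ 1/2) (by norm_num : (0:ℝ) ≤ 1/2)
        (by norm_num : (1:ℝ)/2 + 1/2 = 1)
      have hmid : (1/2 : ℝ) • (a + b - x) + (1/2 : ℝ) • x = m := by
        simp only [smul_eq_mul, hmdef]; ring
      rw [hmid] at hc
      simp only [smul_eq_mul] at hc
      linarith
    have hmono : (∫ _x in m..b, 2 * f' m) ≤ ∫ x in m..b, (f' (a + b - x) + f' x) := by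
      apply intervalIntegral.integral_mono_on hmble intervalIntegrable_const
        (hint3.add hint2)
      exact hptw
    have hconst : (∫ _x in m..b, 2 * f' m) = (b - m) * (2 * f' m) := by
      rw [intervalIntegral.integral_const, smul_eq_mul]
    have haddsplit : (∫ x in m..b, (f' (a + b - x) + f' x)) =
        (∫ x in m..b, f' (a + b - x)) + ∫ x in m..b, f' x :=
      intervalIntegral.integral_add hint3 hint2
    have hbm : b - m = (b - a) / 2 := by rw [hmdef]; ring
    calc f' m * (b - a) = (b - m) * (2 * f' m) := by rw [hbm]; ring
      _ ≤ ∫ x in m..b, (f' (a + b - x) + f' x) := by rw [← hconst]; exact hmono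
      _ = (∫ x in a..m, f' x) + ∫ x in m..b, f' x := by rw [haddsplit, h1]
      _ = ∫ x in a..b, f' x := hsplit.symm
  · -- reverse direction
    intro hcond
    have chord : ∀ x y : ℝ, x ∈ interior I → y ∈ interior I → x < y → ∀ z ∈ Set.Icc x y,
        f' z ≤ f' x + (f' y - f' x) / (y - x) * (z - x) := by
      intro x y hx hy hxy z hz
      have hyx : (0:ℝ) < y - x := by linarith
      set L : ℝ → ℝ := fun u => f' x + (f' y - f' x) / (y - x) * (u - x) with hLdef
      by_contra hzc
      push_neg at hzc
      have hIcc : Set.Icc x y ⊆ interior I := hsub hx hy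
      have hfc : ContinuousOn f' (Set.Icc x y) := hcont'.mono hIcc
      have hLc : Continuous L := by simp only [hLdef]; continuity
      have hgc : ContinuousOn (fun u => f' u - L u) (Set.Icc x y) := hfc.sub hLc.continuousOn
      obtain ⟨c, hcmem, hcmax⟩ := isCompact_Icc.exists_isMaxOn (Set.nonempty_Icc.2 hxy.le) hgc
      set M := f' c - L c with hMdef
      have hMz : f' z - L z ≤ M := hcmax hz
      have hMpos : 0 < M := lt_of_lt_of_le (by simp only [hLdef]; linarith) hMz
      have hLx : L x = f' x := by simp [hLdef]
      have hLy : L y = f' y := by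
        simp only [hLdef]
        field_simp
        ring
      have hcx : x < c := by
        rcases lt_or_eq_of_le hcmem.1 with h | h
        · exact h
        · exfalso; rw [hMdef, ← h, hLx] at hMpos; linarith
      have hcy : c < y := by
        rcases lt_or_eq_of_le hcmem.2 with h | h
        · exact h
        · exfalso; rw [hMdef, h, hLy] at hMpos; linarith
      set δ := min (c - x) (y - c) with hδdef
      have hδpos : 0 < δ := lt_min (by linarith) (by linarith)
      set a' := c - δ with ha'def
      set b' := c + δ with hb'def
      have hxa' : x ≤ a' := by
        have := min_le_left (c - x) (y - c); simp only [ha'def, hδdef]; linarith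
      have hb'y : b' ≤ y := by
        have := min_le_right (c - x) (y - c); simp only [hb'def, hδdef]; linarith
      have ha'b' : a' < b' := by simp only [ha'def, hb'def]; linarith
      have ha'J : a' ∈ interior I := hIcc ⟨hxa', by simp only [ha'def]; linarith⟩
      have hb'J : b' ∈ interior I := hIcc ⟨by simp only [hb'def]; linarith, hb'y⟩
      have hmid : (a' + b') / 2 = c := by simp only [ha'def, hb'def]; ring
      have hcineq : f' c ≤ (f b' - f a') / (b' - a') := by
        have := hcond a' b' ha'J hb'J ha'b'
        rwa [hmid] at this
      have hA : (∫ u in a'..b', f' u) = f b' - f a' := hftc a' b' ha'J hb'J ha'b'.le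
      set B : ℝ → ℝ := fun u => L u + M with hBdef
      have hsubIcc : Set.Icc a' b' ⊆ Set.Icc x y := Set.Icc_subset_Icc hxa' hb'y
      have hle : ∀ u ∈ Set.Ioc a' b', f' u ≤ B u := by
        intro u hu
        have hu' : u ∈ Set.Icc x y := hsubIcc ⟨hu.1.le, hu.2⟩
        have h3 : f' u - L u ≤ f' c - L c := hcmax hu'
        simp only [hBdef, hMdef]
        linarith
      have hlt : ∃ p ∈ Set.Icc a' b', f' p < B p := by
        rcases le_total (c - x) (y - c) with h | h
        · have ha'x : a' = x := by
            simp only [ha'def, hδdef, min_eq_left h]; ring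
          exact ⟨a', ⟨le_refl _, ha'b'.le⟩, by
            rw [ha'x]; simp only [hBdef]; rw [hLx]; linarith⟩
        · have hb'y' : b' = y := by
            simp only [hb'def, hδdef, min_eq_right h]; ring
          exact ⟨b', ⟨ha'b'.le, le_refl _⟩, by
            rw [hb'y']; simp only [hBdef]; rw [hLy]; linarith⟩
      have hintlt : (∫ u in a'..b', f' u) < ∫ u in a'..b', B u :=
        intervalIntegral.integral_lt_integral_of_continuousOn_of_le_of_exists_lt ha'b'
          (hfc.mono hsubIcc) (hLc.add continuous_const).continuousOn hle hlt
      have hBform : ∀ u, B u = (f' x - (f' y - f' x) / (y - x) * x + M)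
          + (f' y - f' x) / (y - x) * u := by
        intro u; simp only [hBdef, hLdef]; ring
      have hBval : (∫ u in a'..b', B u) = (b' - a') * f' c := by
        have hfceq : f' c = (f' x - (f' y - f' x) / (y - x) * x + M)
            + (f' y - f' x) / (y - x) * c := by
          have h1 : B c = f' c := by simp only [hBdef, hMdef]; ring
          rw [← h1]; exact hBform c
        simp only [hBform]
        rw [intervalIntegral.integral_add intervalIntegrable_const
          ((Continuous.intervalIntegrable (by fun_prop :
            Continuous fun u : ℝ => (f' y - f' x) / (y - x) * u)) _ _),
          intervalIntegral.integral_const, intervalIntegral.integral_const_mul, integral_id,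
          hfceq, ← hmid]
        simp only [smul_eq_mul]
        ring
      have hpos : (0:ℝ) < b' - a' := by linarith
      have h1 : f' c * (b' - a') ≤ ∫ u in a'..b', f' u := by
        rw [hA]; exact (le_div_iff₀ hpos).mp hcineq
      have h2 : (∫ u in a'..b', f' u) < (b' - a') * f' c := hBval ▸ hintlt
      linarith
    refine ⟨hJ.convex, ?_⟩
    intro x hx y hy t s ht hs hts
    simp only [smul_eq_mul]
    rcases lt_trichotomy x y with hxy | rfl | hyx
    · have e1 : t * x + s * y - x = s * (y - x) := by linear_combination x * hts
      have e2 : y - (t * x + s * y) = t * (y - x) := by linear_combination (-y) * hts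
      have hz : t * x + s * y ∈ Set.Icc x y :=
        ⟨by linarith [mul_nonneg hs (sub_pos.2 hxy).le],
         by linarith [mul_nonneg ht (sub_pos.2 hxy).le]⟩
      have hc := chord x y hx hy hxy _ hz
      have hzx : t * x + s * y - x = s * (y - x) := by linear_combination x * hts
      have hne : y - x ≠ 0 := by intro h; linarith [(by linarith : (0:ℝ) < y - x)]
      have heq : (f' y - f' x) / (y - x) * (t * x + s * y - x) = s * (f' y - f' x) := by
        rw [hzx]; field_simp
      rw [heq] at hc
      have : f' x + s * (f' y - f' x) = t * f' x + s * f' y := by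
        linear_combination (-(f' x)) * hts
      linarith
    · have hzz : t * x + s * x = x := by linear_combination x * hts
      rw [hzz]
      have : t * f' x + s * f' x = f' x := by linear_combination (f' x) * hts
      linarith
    · have e1 : t * x + s * y - y = t * (x - y) := by linear_combination y * hts
      have e2 : x - (t * x + s * y) = s * (x - y) := by linear_combination (-x) * hts
      have hz : t * x + s * y ∈ Set.Icc y x :=
        ⟨by linarith [mul_nonneg ht (sub_pos.2 hyx).le],
         by linarith [mul_nonneg hs (sub_pos.2 hyx).le]⟩
      have hc := chord y x hy hx hyx _ hz
      have hzy : t * x + s * y - y = t * (x - y) := by linear_combination y * hts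
      have hne : x - y ≠ 0 := by intro h; linarith [(by linarith : (0:ℝ) < x - y)]
      have heq : (f' x - f' y) / (x - y) * (t * x + s * y - y) = t * (f' x - f' y) := by
        rw [hzy]; field_simp
      rw [heq] at hc
      have : f' y + t * (f' x - f' y) = t * f' x + s * f' y := by
        linear_combination (-(f' y)) * hts
      linarith
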